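/- Let y ∈ ℝ^M, A ∈ ℝ^{M×N}, λ > 0, and 0 < γ < 1. Suppose AᵀA is the diagonal matrix diag(α₁², …, α_N²) with α_n > 0 for all n, and set B = √(γ/λ) · A. Then the vector x* ∈ ℝ^N with components x*_n = firm( [Aᵀy]_n / α_n² ; λ/α_n² , λ/(γ α_n²) ) is a global minimizer of F(x) = (1/2)‖y − A x‖₂² + λ ψ_B(x); that is, F(x*) ≤ F(x) for all x ∈ ℝ^N. -/

import Mathlib

open Matrix

/-- The ℓ₁ norm on `ℝ^N`. -/
noncomputable def norm1 {N : ℕ} (v : Fin N → ℝ) : ℝ := ∑ n, |v n|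

/-- The squared Euclidean (ℓ₂) norm on `ℝ^M`. -/
def norm2sq {M : ℕ} (u : Fin M → ℝ) : ℝ := ∑ m, (u m) ^ 2

/-- The generalized Huber function
`S_B(x) = inf_v ( ‖v‖₁ + (1/2) ‖B(x - v)‖₂² )`. -/
noncomputable def genHuber {M N : ℕ} (B : Matrix (Fin M) (Fin N) ℝ) (x : Fin N → ℝ) : ℝ :=
  ⨅ v : Fin N → ℝ, (norm1 v + (1 / 2) * norm2sq (B.mulVec (x - v)))

/-- The generalized MC (GMC) penalty `ψ_B(x) = ‖x‖₁ - S_B(x)`. -/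
noncomputable def gmcPenalty {M N : ℕ} (B : Matrix (Fin M) (Fin N) ℝ) (x : Fin N → ℝ) : ℝ :=
  norm1 x - genHuber B x

/-- The firm threshold function with parameters `0 < λ < μ`. -/
noncomputable def firm (lam mu y : ℝ) : ℝ :=
  if |y| ≤ lam then 0
  else if |y| ≤ mu then mu * (|y| - lam) / (mu - lam) * Real.sign y
  else y

/-! ### Auxiliary scalar lemmas -/

/-- The scalar Huber function in closed form. -/
noncomputable def Hs (b t : ℝ) : ℝ := if |t| ≤ 1/b then b/2 * t^2 else |t| - 1/(2*b)

lemma Hs_key (b : ℝ) (hb : 0 < b) (d : ℝ) : |d| - 1/(2*b) ≤ b/2 * d^2 := by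
  have h2b : (0:ℝ) < 2*b := by linarith
  rw [← mul_le_mul_iff_of_pos_right h2b]
  have e : (|d| - 1/(2*b)) * (2*b) = 2*b*|d| - 1 := by field_simp
  rw [e]
  rcases abs_cases d with ⟨h1, _⟩ | ⟨h1, _⟩ <;> rw [h1] <;>
    nlinarith [sq_nonneg (b*d - 1), sq_nonneg (b*d + 1)]

lemma Hs_le (b t v : ℝ) (hb : 0 < b) : Hs b t ≤ |v| + b/2 * (t - v)^2 := by
  unfold Hs
  split_ifs with h
  · have h2 : b * (t*v) ≤ |v| := by
      calc b * (t*v) ≤ |b * (t*v)| := le_abs_self _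
        _ = (b*|t|) * |v| := by rw [abs_mul, abs_mul, abs_of_pos hb]; ring
        _ ≤ 1 * |v| := by
            apply mul_le_mul_of_nonneg_right _ (abs_nonneg v)
            calc b * |t| ≤ b * (1/b) := by nlinarith [abs_nonneg t]
              _ = 1 := by field_simp
        _ = |v| := one_mul _
    nlinarith [sq_nonneg v]
  · have := Hs_key b hb (t - v)
    have htv : |t| - |v| ≤ |t - v| := abs_sub_abs_le_abs_sub t v
    linarith

lemma Hs_exists (b t : ℝ) (hb : 0 < b) : ∃ v : ℝ, |v| + b/2 * (t - v)^2 = Hs b t := by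
  unfold Hs
  have hb' : 0 < 1/b := by positivity
  split_ifs with h
  · exact ⟨0, by simp⟩
  · push_neg at h
    rcases le_or_gt 0 t with ht | ht
    · refine ⟨t - 1/b, ?_⟩
      have h1 : |t| = t := abs_of_nonneg ht
      rw [h1] at h ⊢
      have h2 : 0 ≤ t - 1/b := by linarith
      rw [abs_of_nonneg h2]
      have e : t - (t - 1/b) = 1/b := by ring
      rw [e]
      field_simp
      ring
    · refine ⟨t + 1/b, ?_⟩
      have h1 : |t| = -t := abs_of_neg ht
      rw [h1] at h ⊢
      have h2 : t + 1/b ≤ 0 := by linarith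
      rw [abs_of_nonpos h2]
      have e : t - (t + 1/b) = -(1/b) := by ring
      rw [e]
      field_simp
      ring

/-! ### Matrix computations -/

lemma norm2sq_eq_mulVec_diag {M N : ℕ} (A : Matrix (Fin M) (Fin N) ℝ) (d : Fin N → ℝ)
    (hAA : Aᵀ * A = Matrix.diagonal d) (w : Fin N → ℝ) :
    norm2sq (A.mulVec w) = ∑ n, d n * (w n)^2 := by
  have h1 : norm2sq (A.mulVec w) = (A.mulVec w) ⬝ᵥ (A.mulVec w) := by
    simp [norm2sq, dotProduct, sq]
  rw [h1, Matrix.dotProduct_mulVec, ← Matrix.mulVec_transpose, Matrix.mulVec_mulVec, hAA]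
  simp [dotProduct, Matrix.mulVec_diagonal, sq]
  exact Finset.sum_congr rfl fun n _ => by ring

lemma cross_term {M N : ℕ} (A : Matrix (Fin M) (Fin N) ℝ) (y : Fin M → ℝ) (x : Fin N → ℝ) :
    y ⬝ᵥ (A.mulVec x) = ∑ n, (Aᵀ.mulVec y) n * x n := by
  rw [Matrix.dotProduct_mulVec, ← Matrix.mulVec_transpose]
  rfl

/-- Separation of the generalized Huber function into scalar Huber functions. -/
lemma genHuber_sep {M N : ℕ} (B : Matrix (Fin M) (Fin N) ℝ) (b : Fin N → ℝ)
    (hb : ∀ n, 0 < b n)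
    (hB : ∀ w : Fin N → ℝ, norm2sq (B.mulVec w) = ∑ n, b n * (w n)^2)
    (x : Fin N → ℝ) :
    genHuber B x = ∑ n, Hs (b n) (x n) := by
  have key : ∀ v : Fin N → ℝ, norm1 v + (1/2) * norm2sq (B.mulVec (x - v))
      = ∑ n, (|v n| + (b n)/2 * (x n - v n)^2) := by
    intro v
    rw [hB (x - v), norm1, Finset.sum_add_distrib, Finset.mul_sum]
    congr 1
    exact Finset.sum_congr rfl fun n _ => by simp [Pi.sub_apply]; ring
  apply le_antisymm
  · choose v hv using fun n => Hs_exists (b n) (x n) (hb n)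
    have h2 : genHuber B x ≤ norm1 v + (1/2) * norm2sq (B.mulVec (x - v)) := by
      apply ciInf_le
      refine ⟨0, ?_⟩
      rintro r ⟨u, rfl⟩
      simp only []
      rw [key u]
      apply Finset.sum_nonneg
      intro n _
      have := sq_nonneg (x n - u n)
      have := abs_nonneg (u n)
      have := (hb n).le
      positivity
    rw [key v] at h2
    calc genHuber B x ≤ ∑ n, (|v n| + (b n)/2 * (x n - v n)^2) := h2
      _ = ∑ n, Hs (b n) (x n) := Finset.sum_congr rfl fun n _ => hv n
  · apply le_ciInf
    intro v
    rw [key v]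
    exact Finset.sum_le_sum fun n _ => Hs_le (b n) (x n) (v n) (hb n)

/-! ### Scalar minimization lemmas -/

section aux
variable (a L γ c t s : ℝ)

lemma aux1a (ha : 0 < a) (hγ1 : γ < 1) (hs : 0 ≤ s) (hC : |c| ≤ L)
    (hct : c*t ≤ |c| * s) (hts : t^2 = s^2) :
    0 ≤ (1-γ)*a/2*t^2 - c*t + L*s := by
  have hts5 : (1-γ)*a*t^2 = (1-γ)*a*s^2 := by rw [hts]
  nlinarith [hts5, mul_nonneg (mul_nonneg (by linarith : (0:ℝ) ≤ 1-γ) ha.le) (sq_nonneg s),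
    mul_nonneg (sub_nonneg.mpr hC) hs]

lemma aux1b (K : ℝ) (ha : 0 < a) (hγ0 : 0 < γ) (hγ1 : γ < 1) (hs : 0 ≤ s)
    (hC : |c| ≤ L) (hct : c*t ≤ |c| * s) (hts : t^2 = s^2) (hK : 2*γ*a*K = L^2) :
    0 ≤ a/2*t^2 - c*t + K := by
  have hk : (0:ℝ) < 2*γ*a := by positivity
  rw [← mul_le_mul_iff_of_pos_left hk]
  have hts2 : γ*a*a*t^2 = γ*a*a*s^2 := by rw [hts]
  nlinarith [hK, hts2, sq_nonneg (γ*a*s - L),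
    mul_nonneg (mul_pos hγ0 ha).le (mul_nonneg (sub_nonneg.mpr hC) hs),
    mul_nonneg (mul_pos hγ0 ha).le (sub_nonneg.mpr hct),
    mul_nonneg (mul_nonneg (mul_nonneg hγ0.le (by linarith : (0:ℝ) ≤ 1-γ)) (mul_pos ha ha).le) (sq_nonneg s)]

lemma aux2a (u : ℝ) (ha : 0 < a) (hγ1 : γ < 1) (hs : 0 ≤ s) (hu0 : 0 ≤ u)
    (hct : c*t ≤ (L + (1-γ)*a*u)*s) (hts : t^2 = s^2) :
    -((1-γ)*a/2*u^2) ≤ (1-γ)*a/2*t^2 - c*t + L*s := by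
  have hts5 : (1-γ)*a*t^2 = (1-γ)*a*s^2 := by rw [hts]
  nlinarith [mul_nonneg (mul_nonneg (by linarith : (0:ℝ) ≤ 1-γ) ha.le) (sq_nonneg (s - u)), hts5]

lemma aux2b (u K : ℝ) (ha : 0 < a) (hγ0 : 0 < γ) (hγ1 : γ < 1) (hs : 0 ≤ s)
    (hu0 : 0 ≤ u) (hct : c*t ≤ (L + (1-γ)*a*u)*s) (hts : t^2 = s^2)
    (hK : 2*γ*a*K = L^2) :
    -((1-γ)*a/2*u^2) ≤ a/2*t^2 - c*t + K := by
  have h1γ : (0:ℝ) < 1-γ := by linarith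
  have hk : (0:ℝ) < 2*γ*(1-γ)*a := by positivity
  rw [← mul_le_mul_iff_of_pos_left hk]
  have hK2 : 2*γ*(1-γ)*a*K = (1-γ)*L^2 := by nlinarith [hK]
  have hts3 : γ*(1-γ)*a*a*t^2 = γ*(1-γ)*a*a*s^2 := by rw [hts]
  nlinarith [hK2, hts3,
    mul_nonneg (mul_pos hγ0 h1γ).le (sq_nonneg (a*s - L - (1-γ)*a*u)),
    mul_nonneg (mul_pos h1γ h1γ).le (sq_nonneg (γ*a*u - L)),
    mul_nonneg (mul_nonneg (mul_pos hγ0 h1γ).le ha.le) (sub_nonneg.mpr hct)]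

lemma aux3a (w W K : ℝ) (ha : 0 < a) (hγ0 : 0 < γ) (hγ1 : γ < 1) (hs : 0 ≤ s)
    (hws : w^2 = W^2) (hct : c*t ≤ (a*W)*s) (hts : t^2 = s^2)
    (hreg : γ*a*s ≤ L) (hγW : L ≤ γ*(a*W)) (hK : 2*γ*a*K = L^2) :
    -(a/2*w^2) + K ≤ (1-γ)*a/2*t^2 - c*t + L*s := by
  have h1γ : (0:ℝ) < 1-γ := by linarith
  have hk : (0:ℝ) < 2*γ^2*a := by positivity
  rw [← mul_le_mul_iff_of_pos_left hk]
  have hK3 : 2*γ^2*a*K = γ*L^2 := by nlinarith [hK]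
  have hts4 : γ*γ*(1-γ)*a*a*t^2 = γ*γ*(1-γ)*a*a*s^2 := by rw [hts]
  have hws2 : γ*γ*a*a*w^2 = γ*γ*a*a*W^2 := by rw [hws]
  nlinarith [hK3, hts4, hws2, sq_nonneg (γ*a*W - L),
    mul_nonneg (sub_nonneg.mpr hreg) (by nlinarith : (0:ℝ) ≤ γ*a*W - L),
    mul_nonneg h1γ.le (sq_nonneg (γ*a*s - L)),
    mul_nonneg (mul_nonneg (mul_nonneg hγ0.le hγ0.le) ha.le) (sub_nonneg.mpr hct)]

lemma aux3b (w K : ℝ) (ha : 0 < a) (hwc : a*w = c) :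
    -(a/2*w^2) + K ≤ a/2*t^2 - c*t + K := by
  have h2 : a*w*t = c*t := by rw [hwc]
  nlinarith [mul_nonneg ha.le (sq_nonneg (t - w)), h2]

end aux

/-- The scalar cost function. -/
noncomputable def gsc (a L γ c t : ℝ) : ℝ := a/2*t^2 - c*t + L*|t| - L * Hs (γ*a/L) t

/-- Piecewise form of the scalar cost. -/
noncomputable def gsc2 (a L γ c t : ℝ) : ℝ :=
  if γ*a*|t| ≤ L then (1-γ)*a/2*t^2 - c*t + L*|t| else a/2*t^2 - c*t + L^2/(2*γ*a)

lemma gsc_eq (a L γ c t : ℝ) (ha : 0 < a) (hL : 0 < L) (hγ0 : 0 < γ) :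
    gsc a L γ c t = gsc2 a L γ c t := by
  have hb : (0:ℝ) < γ*a/L := by positivity
  have hcond : (|t| ≤ 1/(γ*a/L)) ↔ γ*a*|t| ≤ L := by
    rw [one_div_div, le_div_iff₀ (by positivity)]
    constructor <;> intro h <;> nlinarith
  unfold gsc gsc2 Hs
  split_ifs with h1 h2 h2
  · field_simp; ring
  · exact absurd (hcond.mp h1) h2
  · exact absurd (hcond.mpr h2) h1
  · field_simp; ring

set_option maxHeartbeats 1000000 in
lemma scalar_min2 (a L γ c : ℝ) (ha : 0 < a) (hL : 0 < L) (hγ0 : 0 < γ) (hγ1 : γ < 1)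
    (t : ℝ) : gsc2 a L γ c (firm (L/a) (L/(γ*a)) (c/a)) ≤ gsc2 a L γ c t := by
  have h1γ : (0:ℝ) < 1 - γ := by linarith
  have hca : |c/a| = |c|/a := by rw [abs_div, abs_of_pos ha]
  have hct : c*t ≤ |c| * |t| := (abs_mul c t) ▸ le_abs_self (c*t)
  have hs0 : 0 ≤ |t| := abs_nonneg t
  have hC0 : 0 ≤ |c| := abs_nonneg c
  have hts : t^2 = |t|^2 := (sq_abs t).symm
  have hK : 2*γ*a*(L^2/(2*γ*a)) = L^2 := by field_simp
  unfold firm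
  rw [hca]
  split_ifs with h1 h2
  · -- |c| ≤ L, xs = 0
    have hc1 : |c| ≤ L := by rwa [div_le_div_iff₀ ha ha, mul_le_mul_iff_of_pos_right ha] at h1
    have g0 : gsc2 a L γ c 0 = 0 := by
      unfold gsc2; rw [if_pos (by simp; positivity)]; simp
    rw [g0]
    unfold gsc2
    split_ifs with h
    · exact aux1a a L γ c t |t| ha hγ1 hs0 hc1 hct hts
    · exact aux1b a L γ c t |t| _ ha hγ0 hγ1 hs0 hc1 hct hts hK
  · -- L < |c| ≤ L/γ
    have hc1 : L < |c| := by
      by_contra hcon; push_neg at hcon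
      exact h1 (by rw [div_le_div_iff₀ ha ha, mul_le_mul_iff_of_pos_right ha]; exact hcon)
    have hc2 : γ * |c| ≤ L := by
      rw [div_le_div_iff₀ ha (by positivity)] at h2
      nlinarith
    have hcne : c ≠ 0 := by
      intro h; rw [h] at hc1; simp at hc1; linarith
    have hσ : c * Real.sign c = |c| := by
      rcases lt_or_gt_of_ne hcne with h | h
      · rw [Real.sign_of_neg h, abs_of_neg h]; ring
      · rw [Real.sign_of_pos h, abs_of_pos h]; ring
    have hσa : Real.sign (c/a) = Real.sign c := by
      rcases lt_or_gt_of_ne hcne with h | h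
      · rw [Real.sign_of_neg h, Real.sign_of_neg (div_neg_of_neg_of_pos h ha)]
      · rw [Real.sign_of_pos h, Real.sign_of_pos (div_pos h ha)]
    have hσab : |Real.sign c| = 1 := by
      rcases lt_or_gt_of_ne hcne with h | h
      · rw [Real.sign_of_neg h]; norm_num
      · rw [Real.sign_of_pos h]; norm_num
    obtain ⟨u, hu0, huu⟩ : ∃ u : ℝ, 0 ≤ u ∧ (1-γ)*a*u = |c| - L := by
      refine ⟨(|c| - L)/((1-γ)*a), div_nonneg (by linarith) (by positivity), ?_⟩
      field_simp
    have hxs : L / (γ * a) * (|c| / a - L / a) / (L / (γ * a) - L / a) * Real.sign (c/a)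
        = u * Real.sign c := by
      rw [hσa]
      congr 1
      have hden : L / (γ * a) - L / a = L*(1-γ)/(γ*a) := by field_simp
      rw [hden, div_eq_iff (by positivity)]
      have e : L / (γ * a) * (|c| / a - L / a) = L * (|c| - L) / (γ * a * a) := by
        field_simp
      rw [e, div_eq_iff (by positivity)]
      have e2 : u * (L*(1-γ)/(γ*a)) * (γ*a*a) = L*((1-γ)*a*u) := by field_simp
      rw [e2, huu]
    rw [hxs]
    have habs : |u * Real.sign c| = u := by
      rw [abs_mul, hσab, abs_of_nonneg hu0, mul_one]
    have hreg : γ*a*u ≤ L := by nlinarith [huu, hc2, mul_pos hγ0 ha]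
    have hsq : (u * Real.sign c)^2 = u^2 := by
      rw [mul_pow]
      have e : (Real.sign c)^2 = |Real.sign c|^2 := (sq_abs _).symm
      rw [e, hσab]; ring
    have hcu : c * (u * Real.sign c) = |c| * u := by
      rw [← mul_assoc, mul_comm c u, mul_assoc, hσ, mul_comm]
    have hval : gsc2 a L γ c (u * Real.sign c) = -((1-γ)*a/2*u^2) := by
      have hcond : γ*a*|u * Real.sign c| ≤ L := by rw [habs]; exact hreg
      unfold gsc2
      rw [if_pos hcond, hsq, hcu, habs]
      nlinarith [huu]
    rw [hval]
    have hctu : c*t ≤ (L + (1-γ)*a*u) * |t| := by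
      have e : |c| = L + (1-γ)*a*u := by linarith
      rw [← e]; exact hct
    unfold gsc2
    split_ifs with h
    · exact aux2a a L γ c t |t| u ha hγ1 hs0 hu0 hctu hts
    · exact aux2b a L γ c t |t| u _ ha hγ0 hγ1 hs0 hu0 hctu hts hK
  · -- γ|c| > L, xs = c/a
    push_neg at h1 h2
    have hc2 : L < γ * |c| := by
      rw [div_lt_div_iff₀ (by positivity) ha] at h2
      nlinarith
    have hw : a * (c/a) = c := by field_simp
    have hCw : a * |c/a| = |c| := by rw [hca]; field_simp
    have hreg : ¬ (γ*a*|c/a| ≤ L) := by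
      intro hcon
      nlinarith [hCw]
    have hval : gsc2 a L γ c (c/a) = -(a/2*(c/a)^2) + L^2/(2*γ*a) := by
      unfold gsc2
      rw [if_neg hreg]
      have e : c * (c/a) = a * (c/a)^2 := by field_simp
      rw [e]; ring
    rw [hval]
    obtain ⟨w, hwc, hwabs⟩ : ∃ w : ℝ, a * w = c ∧ a * |w| = |c| := ⟨c/a, hw, hCw⟩
    have hwc' : c/a = w := by field_simp [← hwc]; linarith
    rw [hwc']
    have hws : w^2 = |w|^2 := (sq_abs w).symm
    have hctw : c*t ≤ (a*|w|) * |t| := by rw [hwabs]; exact hct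
    have hγw : L ≤ γ*(a*|w|) := by rw [hwabs]; linarith
    unfold gsc2
    split_ifs with h
    · exact aux3a a L γ c t |t| w |w| _ ha hγ0 hγ1 hs0 hws hctw hts h hγw hK
    · exact aux3b a c t w _ ha hwc

lemma scalar_min (a L γ c : ℝ) (ha : 0 < a) (hL : 0 < L) (hγ0 : 0 < γ) (hγ1 : γ < 1)
    (t : ℝ) : gsc a L γ c (firm (L/a) (L/(γ*a)) (c/a)) ≤ gsc a L γ c t := by
  rw [gsc_eq _ _ _ _ _ ha hL hγ0, gsc_eq _ _ _ _ _ ha hL hγ0]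
  exact scalar_min2 a L γ c ha hL hγ0 hγ1 t

/-- If `AᵀA` is diagonal with positive diagonal entries and `B = √(γ/λ) A` with
`0 < γ < 1`, then element-wise firm thresholding gives a global minimizer of the
GMC-regularized least squares cost function. -/
theorem gmc_diagonal_minimizer_firm {M N : ℕ} (y : Fin M → ℝ)
    (A : Matrix (Fin M) (Fin N) ℝ) (lam γ : ℝ) (hlam : 0 < lam)
    (hγ0 : 0 < γ) (hγ1 : γ < 1) (α : Fin N → ℝ) (hα : ∀ n, 0 < α n)
    (hAA : Aᵀ * A = Matrix.diagonal (fun n => (α n) ^ 2)) :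
    let B : Matrix (Fin M) (Fin N) ℝ := Real.sqrt (γ / lam) • A
    let xstar : Fin N → ℝ := fun n =>
      firm (lam / (α n) ^ 2) (lam / (γ * (α n) ^ 2)) ((Aᵀ.mulVec y) n / (α n) ^ 2)
    let F : (Fin N → ℝ) → ℝ := fun x =>
      (1 / 2) * norm2sq (y - A.mulVec x) + lam * gmcPenalty B x
    ∀ x : Fin N → ℝ, F xstar ≤ F x := by
  intro B xstar F x
  have hα2 : ∀ n, 0 < (α n)^2 := fun n => pow_pos (hα n) 2
  set b : Fin N → ℝ := fun n => γ * (α n)^2 / lam with hbdef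
  have hb : ∀ n, 0 < b n := fun n => by have := hα2 n; simp only [hbdef]; positivity
  have hBsq : ∀ w : Fin N → ℝ, norm2sq (B.mulVec w) = ∑ n, b n * (w n)^2 := by
    intro w
    have e0 : B.mulVec w = Real.sqrt (γ/lam) • (A.mulVec w) := by
      simp only [B, Matrix.smul_mulVec]
    rw [e0]
    have e1 : norm2sq (Real.sqrt (γ/lam) • (A.mulVec w)) = (γ/lam) * norm2sq (A.mulVec w) := by
      unfold norm2sq
      rw [Finset.mul_sum]
      refine Finset.sum_congr rfl fun m _ => ?_
      have : (Real.sqrt (γ/lam) • (A.mulVec w)) m = Real.sqrt (γ/lam) * (A.mulVec w) m := rfl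
      rw [this, mul_pow, Real.sq_sqrt (by positivity : (0:ℝ) ≤ γ/lam)]
    rw [e1, norm2sq_eq_mulVec_diag A _ hAA w, Finset.mul_sum]
    refine Finset.sum_congr rfl fun n _ => ?_
    simp only [hbdef]
    field_simp
  have hGH : ∀ z : Fin N → ℝ, genHuber B z = ∑ n, Hs (b n) (z n) :=
    genHuber_sep B b hb hBsq
  set c : Fin N → ℝ := Aᵀ.mulVec y with hcdef
  have hF : ∀ z : Fin N → ℝ,
      F z = 1/2 * norm2sq y + ∑ n, gsc ((α n)^2) lam γ (c n) (z n) := by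
    intro z
    show 1/2 * norm2sq (y - A.mulVec z) + lam * (norm1 z - genHuber B z) = _
    rw [hGH z]
    have e1 : norm2sq (y - A.mulVec z)
        = norm2sq y - 2*(∑ n, c n * z n) + ∑ n, (α n)^2*(z n)^2 := by
      have e2 : norm2sq (y - A.mulVec z)
          = norm2sq y - 2*(y ⬝ᵥ A.mulVec z) + norm2sq (A.mulVec z) := by
        unfold norm2sq dotProduct
        rw [Finset.mul_sum, ← Finset.sum_sub_distrib, ← Finset.sum_add_distrib]
        refine Finset.sum_congr rfl fun m _ => ?_
        have : (y - A.mulVec z) m = y m - (A.mulVec z) m := rfl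
        rw [this]; ring
      rw [e2, cross_term, norm2sq_eq_mulVec_diag A _ hAA]
    rw [e1, norm1]
    have e3 : ∑ n, gsc ((α n)^2) lam γ (c n) (z n)
        = (∑ n, (α n)^2*(z n)^2)/2 - (∑ n, c n * z n) + lam*(∑ n, |z n|)
          - lam*(∑ n, Hs (b n) (z n)) := by
      unfold gsc
      rw [Finset.mul_sum, Finset.mul_sum, Finset.sum_div, ← Finset.sum_sub_distrib,
        ← Finset.sum_add_distrib, ← Finset.sum_sub_distrib]
      refine Finset.sum_congr rfl fun n _ => ?_
      have : γ * (α n)^2 / lam = b n := rfl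
      rw [← this]
      ring
    rw [e3]
    ring
  rw [hF xstar, hF x]
  apply add_le_add_right
  apply Finset.sum_le_sum
  intro n _
  have hx : xstar n = firm (lam/(α n)^2) (lam/(γ*(α n)^2)) (c n/(α n)^2) := rfl
  rw [hx]
  exact scalar_min ((α n)^2) lam γ (c n) (hα2 n) hlam hγ0 hγ1 (x n)
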